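/- (Matroid DLP duality) Let M be a matroid on a set E of size n with rank k. Define k_j(M) = max{h⁰(M,J) : J ⊆ E, |J| = j}, where h⁰(M,J) = r(E) − r(E\J). Then for every j with 1 ≤ j ≤ n, k_{n−j}(M*) = k_j(M) + n − j − k. -/

import Mathlib

/-- The rank of a subset `J`: the maximal cardinality of an independent subset of `J`. -/
def matroidRank {α : Type*} [DecidableEq α] (Indep : Finset α → Prop)
    [DecidablePred Indep] (J : Finset α) : ℕ :=
  (J.powerset.filter Indep).sup Finset.card

/-- `h⁰(M, J) = r(E) - r(E \ J)`. -/
def h0Matroid {α : Type*} [DecidableEq α] (E : Finset α) (Indep : Finset α → Prop)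
    [DecidablePred Indep] (J : Finset α) : ℕ :=
  matroidRank Indep E - matroidRank Indep (E \ J)

/-- The rank function of the dual matroid: `r*(S) = |S| + r(E \ S) - r(E)`. -/
def dualMatroidRank {α : Type*} [DecidableEq α] (E : Finset α) (Indep : Finset α → Prop)
    [DecidablePred Indep] (S : Finset α) : ℕ :=
  S.card + matroidRank Indep (E \ S) - matroidRank Indep E

/-- `h⁰(M*, J) = r*(E) - r*(E \ J)`. -/
def h0DualMatroid {α : Type*} [DecidableEq α] (E : Finset α) (Indep : Finset α → Prop)
    [DecidablePred Indep] (J : Finset α) : ℕ :=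
  dualMatroidRank E Indep E - dualMatroidRank E Indep (E \ J)

/-- `k_j = max { h⁰(J) : J ⊆ E, |J| = j }`, the dimension/length profile. -/
def matroidDLP {α : Type*} [DecidableEq α] (E : Finset α) (h0 : Finset α → ℕ)
    (j : ℕ) : ℕ :=
  ((E.powerset).filter (fun J => J.card = j)).sup h0

section Aux
variable {α : Type*} [DecidableEq α] {Indep : Finset α → Prop} [DecidablePred Indep]

lemma aux_rank_le_card (J : Finset α) : matroidRank Indep J ≤ J.card := by
  apply Finset.sup_le
  intro I hI
  simp only [Finset.mem_filter, Finset.mem_powerset] at hI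
  exact Finset.card_le_card hI.1

lemma aux_rank_mono {A B : Finset α} (h : A ⊆ B) :
    matroidRank Indep A ≤ matroidRank Indep B := by
  apply Finset.sup_le
  intro I hI
  simp only [Finset.mem_filter, Finset.mem_powerset] at hI
  exact Finset.le_sup (f := Finset.card)
    (by simp only [Finset.mem_filter, Finset.mem_powerset]; exact ⟨hI.1.trans h, hI.2⟩)

lemma aux_rank_lower (h_mono : ∀ I I' : Finset α, I' ⊆ I → Indep I → Indep I')
    (E S : Finset α) :
    matroidRank Indep E ≤ S.card + matroidRank Indep (E \ S) := by
  apply Finset.sup_le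
  intro I hI
  simp only [Finset.mem_filter, Finset.mem_powerset] at hI
  have h1 : (I \ S).card ≤ matroidRank Indep (E \ S) :=
    Finset.le_sup (f := Finset.card)
      (by simp only [Finset.mem_filter, Finset.mem_powerset]
          exact ⟨Finset.sdiff_subset_sdiff hI.1 le_rfl,
            h_mono I (I \ S) Finset.sdiff_subset hI.2⟩)
  have h2 : (I ∩ S).card + (I \ S).card = I.card := Finset.card_inter_add_card_sdiff I S
  have h3 : (I ∩ S).card ≤ S.card := Finset.card_le_card Finset.inter_subset_right
  omega

end Aux

/-- Matroid DLP duality: `k_{n-j}(M*) = k_j(M) + n - j - k` for `1 ≤ j ≤ n`. -/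
theorem matroid_dlp_duality {α : Type*} [DecidableEq α]
    (E : Finset α) (Indep : Finset α → Prop) [DecidablePred Indep]
    (h_subset_ground : ∀ I, Indep I → I ⊆ E)
    (h_empty : Indep ∅)
    (h_mono : ∀ I I' : Finset α, I' ⊆ I → Indep I → Indep I')
    (h_exch : ∀ I₁ I₂ : Finset α, Indep I₁ → Indep I₂ → I₁.card < I₂.card →
      ∃ e ∈ I₂ \ I₁, Indep (insert e I₁))
    (n k : ℕ) (hn : E.card = n) (hk : matroidRank Indep E = k)
    (j : ℕ) (hj1 : 1 ≤ j) (hjn : j ≤ n) :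
    (matroidDLP E (h0DualMatroid E Indep) (n - j) : ℤ)
      = (matroidDLP E (h0Matroid E Indep) j : ℤ) + n - j - k := by
  have hkn : k ≤ n := hk ▸ hn ▸ aux_rank_le_card E
  -- rank of empty set is 0
  have hr0 : matroidRank Indep (∅ : Finset α) = 0 :=
    Nat.le_zero.mp ((aux_rank_le_card ∅).trans (by simp))
  -- h0Dual for J ⊆ E equals |J| - r(J)
  have hdual : ∀ J : Finset α, J ⊆ E →
      h0DualMatroid E Indep J = J.card - matroidRank Indep J := by
    intro J hJ
    have hEJ : E \ (E \ J) = J := by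
      rw [Finset.sdiff_sdiff_self_left, Finset.inter_eq_right.mpr hJ]
    have hcardEJ : (E \ J).card = n - J.card := by
      rw [Finset.card_sdiff_of_subset hJ, hn]
    have hJn : J.card ≤ n := hn ▸ Finset.card_le_card hJ
    have h1 : matroidRank Indep E ≤ (E \ J).card + matroidRank Indep J := by
      have := aux_rank_lower h_mono E (E \ J)
      rwa [hEJ] at this
    have h2 : matroidRank Indep J ≤ J.card := aux_rank_le_card J
    unfold h0DualMatroid dualMatroidRank
    rw [Finset.sdiff_self, hr0, hEJ, hk, hn, hcardEJ]
    omega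
  -- h0 for J ⊆ E equals k - r(E \ J)
  have hh0 : ∀ J : Finset α, h0Matroid E Indep J = k - matroidRank Indep (E \ J) := by
    intro J; unfold h0Matroid; rw [hk]
  -- the two index sets
  set P := E.powerset.filter (fun J => J.card = n - j) with hP
  set Q := E.powerset.filter (fun J => J.card = j) with hQ
  have hPmem : ∀ J, J ∈ P ↔ J ⊆ E ∧ J.card = n - j := by
    intro J; simp [hP]
  have hQmem : ∀ J, J ∈ Q ↔ J ⊆ E ∧ J.card = j := by
    intro J; simp [hQ]
  obtain ⟨J₀, hJ₀E, hJ₀c⟩ := Finset.exists_subset_card_eq (s := E) (n := n - j) (by omega)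
  have hPne : P.Nonempty := ⟨J₀, (hPmem J₀).mpr ⟨hJ₀E, hJ₀c⟩⟩
  -- the minimum rank over (n-j)-subsets
  set m := P.inf' hPne (matroidRank Indep) with hm
  obtain ⟨J₁, hJ₁P, hJ₁m⟩ := Finset.exists_mem_eq_inf' hPne (matroidRank Indep)
  obtain ⟨hJ₁E, hJ₁c⟩ := (hPmem J₁).mp hJ₁P
  have hmle : m ≤ n - j := by
    rw [hm, hJ₁m, ← hJ₁c]; exact aux_rank_le_card J₁
  have hmk : m ≤ k := by
    rw [hm, hJ₁m, ← hk]; exact aux_rank_mono hJ₁E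
  -- LHS sup = (n - j) - m
  have hL : matroidDLP E (h0DualMatroid E Indep) (n - j) = (n - j) - m := by
    unfold matroidDLP
    apply le_antisymm
    · apply Finset.sup_le
      intro J hJ
      obtain ⟨hJE, hJc⟩ := (hPmem J).mp hJ
      rw [hdual J hJE, hJc]
      exact Nat.sub_le_sub_left (Finset.inf'_le _ hJ) _
    · have := Finset.le_sup (f := h0DualMatroid E Indep) hJ₁P
      rwa [hdual J₁ hJ₁E, hJ₁c, ← hJ₁m] at this
  -- RHS sup = k - m
  have hR : matroidDLP E (h0Matroid E Indep) j = k - m := by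
    unfold matroidDLP
    apply le_antisymm
    · apply Finset.sup_le
      intro S hS
      obtain ⟨hSE, hSc⟩ := (hQmem S).mp hS
      rw [hh0 S]
      apply Nat.sub_le_sub_left
      rw [hm]
      apply Finset.inf'_le
      rw [hPmem]
      refine ⟨Finset.sdiff_subset, ?_⟩
      rw [Finset.card_sdiff_of_subset hSE, hn, hSc]
    · -- take S := E \ J₁, then E \ S = J₁
      have hS1 : E \ J₁ ∈ Q := by
        rw [hQmem]
        refine ⟨Finset.sdiff_subset, ?_⟩
        rw [Finset.card_sdiff_of_subset hJ₁E, hn, hJ₁c]; omega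
      have := Finset.le_sup (f := h0Matroid E Indep) hS1
      rw [hh0 (E \ J₁), Finset.sdiff_sdiff_self_left,
        Finset.inter_eq_right.mpr hJ₁E, ← hJ₁m] at this
      exact this
  rw [hL, hR]
  omega
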